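/- Let 0 < ε ≤ 1/4. There exist constants c, c' > 0 such that for every T with 0 < T ≤ 1/2 and every real number a > 0 with T ≤ a², ∫_{T/2}^{T} s^{-1/4} (-ln s)^{-1/4-ε} (T - s)^{-3/2} e^{-a²/(T-s)} ds ≥ c T^{-3/4} (-ln T)^{-1/4-ε} e^{-c' a²/T}. -/

import Mathlib

set_option maxHeartbeats 1000000

open MeasureTheory Real Set

theorem stmt_11 (ε : ℝ) (hε : 0 < ε) (hε' : ε ≤ 1/4) :
    ∃ c c' : ℝ, 0 < c ∧ 0 < c' ∧ ∀ T : ℝ, 0 < T → T ≤ 1/2 → ∀ a : ℝ, 0 < a → T ≤ a^2 →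
      c * T ^ (-(3/4) : ℝ) * (-Real.log T) ^ (-(1/4) - ε) * Real.exp (-(c'*a^2)/T) ≤
        ∫ s in Ioo (T/2) T,
          s ^ (-(1/4) : ℝ) * (-Real.log s) ^ (-(1/4) - ε) *
            (T - s) ^ (-(3/2) : ℝ) * Real.exp (-(a^2)/(T - s)) := by
  refine ⟨1/2, 8, by norm_num, by norm_num, ?_⟩
  intro T hT hT2 a ha haT
  have hT1 : T < 1 := lt_of_le_of_lt hT2 (by norm_num)
  have hlogT : Real.log T < 0 := Real.log_neg hT hT1
  set L : ℝ := -Real.log T with hLdef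
  have hL : 0 < L := by simp only [hLdef]; linarith
  set p : ℝ := -(1/4) - ε with hpdef
  have hp : p ≤ 0 := by simp only [hpdef]; linarith
  set f : ℝ → ℝ := fun s =>
    s ^ (-(1/4) : ℝ) * (-Real.log s) ^ p * (T - s) ^ (-(3/2) : ℝ) *
      Real.exp (-(a^2)/(T - s)) with hfdef
  -- measurability
  have hmeas : AEStronglyMeasurable f (volume.restrict (Ioo (T/2) T)) := by
    apply Measurable.aestronglyMeasurable
    apply Measurable.mul
    apply Measurable.mul
    apply Measurable.mul
    · exact measurable_id.pow measurable_const
    · exact (Real.measurable_log.neg).pow measurable_const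
    · exact ((measurable_const.sub measurable_id).pow measurable_const)
    · exact (measurable_const.div (measurable_const.sub measurable_id)).exp
  -- nonnegativity on the interval
  have hfnn : ∀ s ∈ Ioo (T/2) T, 0 ≤ f s := by
    intro s hs
    have hs0 : 0 < s := lt_trans (by linarith) hs.1
    have hu : 0 < T - s := by linarith [hs.2]
    have hls : 0 ≤ -Real.log s := by
      have : Real.log s < 0 := Real.log_neg hs0 (by linarith [hs.2])
      linarith
    exact mul_nonneg (mul_nonneg (mul_nonneg (Real.rpow_nonneg hs0.le _)
      (Real.rpow_nonneg hls _)) (Real.rpow_nonneg hu.le _)) (Real.exp_pos _).le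
  -- uniform bound on the interval
  set M : ℝ := (T/2) ^ (-(1/4) : ℝ) * L ^ p * (4 * T ^ ((1/2) : ℝ) / a^4) with hMdef
  have hbound : ∀ s ∈ Ioo (T/2) T, f s ≤ M := by
    intro s hs
    have hs0 : 0 < s := lt_trans (by linarith) hs.1
    have hu : 0 < T - s := by linarith [hs.2]
    have hls : 0 < -Real.log s := by
      have : Real.log s < 0 := Real.log_neg hs0 (by linarith [hs.2])
      linarith
    have h1 : s ^ (-(1/4) : ℝ) ≤ (T/2) ^ (-(1/4) : ℝ) :=
      Real.rpow_le_rpow_of_nonpos (by linarith) hs.1.le (by norm_num)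
    have h2 : (-Real.log s) ^ p ≤ L ^ p := by
      apply Real.rpow_le_rpow_of_nonpos hL _ hp
      have : Real.log s ≤ Real.log T := Real.log_le_log hs0 hs.2.le
      simp only [hLdef]; linarith
    have h34 : (T - s) ^ (-(3/2) : ℝ) * Real.exp (-(a^2)/(T - s)) ≤ 4 * T ^ ((1/2) : ℝ) / a^4 := by
      set u : ℝ := T - s with hud
      have hexp2 : (a^2/u/2)^2 ≤ Real.exp (a^2/u) := by
        have h1' : a^2/u/2 ≤ Real.exp (a^2/u/2) :=
          le_trans (by linarith [Real.add_one_le_exp (a^2/u/2)]) le_rfl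
        have h1'' : a^2/u/2 ≤ Real.exp (a^2/u/2) := by
          have := Real.add_one_le_exp (a^2/u/2); linarith
        calc (a^2/u/2)^2 ≤ (Real.exp (a^2/u/2))^2 :=
              pow_le_pow_left₀ (by positivity) h1'' 2
          _ = Real.exp (a^2/u) := by
              rw [sq, ← Real.exp_add]; ring_nf
      have hexpA : Real.exp (-(a^2)/u) ≤ 4*u^2/a^4 := by
        have hx : 0 < a^2/u/2 := by positivity
        have : Real.exp (-(a^2)/u) = (Real.exp (a^2/u))⁻¹ := by
          rw [neg_div, Real.exp_neg]
        rw [this]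
        have hinv : (Real.exp (a^2/u))⁻¹ ≤ ((a^2/u/2)^2)⁻¹ :=
          inv_anti₀ (by positivity) hexp2
        refine le_trans hinv (le_of_eq ?_)
        field_simp
        ring
      calc u ^ (-(3/2) : ℝ) * Real.exp (-(a^2)/u)
          ≤ u ^ (-(3/2) : ℝ) * (4*u^2/a^4) :=
            mul_le_mul_of_nonneg_left hexpA (Real.rpow_nonneg hu.le _)
        _ = 4 * u ^ ((1/2) : ℝ) / a^4 := by
            have hup : u ^ (-(3/2):ℝ) * u ^ (2:ℝ) = u ^ ((1/2):ℝ) := by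
              rw [← Real.rpow_add hu]; norm_num
            rw [show (u:ℝ)^2 = u ^ (2:ℝ) from (Real.rpow_two u).symm]
            calc u ^ (-(3/2):ℝ) * (4 * u ^ (2:ℝ) / a^4)
                = 4 * (u ^ (-(3/2):ℝ) * u ^ (2:ℝ)) / a^4 := by ring
              _ = 4 * u ^ ((1/2):ℝ) / a^4 := by rw [hup]
        _ ≤ 4 * T ^ ((1/2) : ℝ) / a^4 := by
            have h' : u ^ ((1/2):ℝ) ≤ T ^ ((1/2):ℝ) :=
              Real.rpow_le_rpow hu.le (by simp only [hud]; linarith [hs.1, hT]) (by norm_num)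
            have ha4 : (0:ℝ) < a^4 := by positivity
            exact (div_le_div_iff_of_pos_right ha4).mpr (by linarith)
    calc f s = (s ^ (-(1/4) : ℝ) * (-Real.log s) ^ p) *
          ((T - s) ^ (-(3/2) : ℝ) * Real.exp (-(a^2)/(T - s))) := by
            simp only [hfdef]; ring
      _ ≤ ((T/2) ^ (-(1/4) : ℝ) * L ^ p) * (4 * T ^ ((1/2) : ℝ) / a^4) := by
          apply mul_le_mul
          · exact mul_le_mul h1 h2 (Real.rpow_nonneg hls.le _) (Real.rpow_nonneg (by linarith) _)
          · exact h34
          · exact mul_nonneg (Real.rpow_nonneg hu.le _) (Real.exp_pos _).le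
          · exact mul_nonneg (Real.rpow_nonneg (by linarith) _) (Real.rpow_nonneg hL.le _)
      _ = M := by rw [hMdef]
  -- integrability
  have hint : IntegrableOn f (Ioo (T/2) T) := by
    apply Integrable.mono' (integrableOn_const (C := M) measure_Ioo_lt_top.ne) hmeas
    filter_upwards [ae_restrict_mem measurableSet_Ioo] with s hs
    rw [Real.norm_eq_abs, abs_of_nonneg (hfnn s hs)]
    exact hbound s hs
  -- the smaller interval
  have hsub : Ioo (3*T/4) (7*T/8) ⊆ Ioo (T/2) T :=
    Ioo_subset_Ioo (by linarith) (by linarith)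
  set m : ℝ := T ^ (-(1/4) : ℝ) * (2*L) ^ p * (T/4) ^ (-(3/2) : ℝ) *
    Real.exp (-(8*a^2)/T) with hmdef
  -- pointwise lower bound on the smaller interval
  have hlow : ∀ s ∈ Ioo (3*T/4) (7*T/8), m ≤ f s := by
    intro s hs
    have hs0 : 0 < s := lt_trans (by linarith) hs.1
    have hsT : s < T := by linarith [hs.2]
    have hu : 0 < T - s := by linarith
    have hls : 0 < -Real.log s := by
      have : Real.log s < 0 := Real.log_neg hs0 (by linarith)
      linarith
    have hA : T ^ (-(1/4) : ℝ) ≤ s ^ (-(1/4) : ℝ) :=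
      Real.rpow_le_rpow_of_nonpos hs0 hsT.le (by norm_num)
    have hB : (2*L) ^ p ≤ (-Real.log s) ^ p := by
      have hTh : T*T ≤ T/2 := by nlinarith
      have hTT : T*T ≤ s := by linarith [hs.1]
      have hlog : Real.log (T*T) ≤ Real.log s := Real.log_le_log (by positivity) hTT
      rw [Real.log_mul hT.ne' hT.ne'] at hlog
      have h2Ls : -Real.log s ≤ 2*L := by simp only [hLdef]; linarith
      exact Real.rpow_le_rpow_of_nonpos hls h2Ls hp
    have hC : (T/4) ^ (-(3/2) : ℝ) ≤ (T - s) ^ (-(3/2) : ℝ) :=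
      Real.rpow_le_rpow_of_nonpos hu (by linarith [hs.1]) (by norm_num)
    have hD : Real.exp (-(8*a^2)/T) ≤ Real.exp (-(a^2)/(T - s)) := by
      apply Real.exp_le_exp.mpr
      rw [neg_div, neg_div, neg_le_neg_iff]
      rw [div_le_div_iff₀ hu hT]
      nlinarith [sq_nonneg a, hs.2]
    have h12 : T ^ (-(1/4) : ℝ) * (2*L) ^ p ≤ s ^ (-(1/4) : ℝ) * (-Real.log s) ^ p :=
      mul_le_mul hA hB (Real.rpow_nonneg (by linarith) _) (Real.rpow_nonneg hs0.le _)
    have h123 : T ^ (-(1/4) : ℝ) * (2*L) ^ p * (T/4) ^ (-(3/2) : ℝ) ≤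
        s ^ (-(1/4) : ℝ) * (-Real.log s) ^ p * (T - s) ^ (-(3/2) : ℝ) :=
      mul_le_mul h12 hC (Real.rpow_nonneg (by linarith) _)
        (mul_nonneg (Real.rpow_nonneg hs0.le _) (Real.rpow_nonneg hls.le _))
    have hfin : T ^ (-(1/4) : ℝ) * (2*L) ^ p * (T/4) ^ (-(3/2) : ℝ) * Real.exp (-(8*a^2)/T) ≤
        s ^ (-(1/4) : ℝ) * (-Real.log s) ^ p * (T - s) ^ (-(3/2) : ℝ) *
          Real.exp (-(a^2)/(T - s)) :=
      mul_le_mul h123 hD (Real.exp_pos _).le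
        (mul_nonneg (mul_nonneg (Real.rpow_nonneg hs0.le _) (Real.rpow_nonneg hls.le _))
          (Real.rpow_nonneg hu.le _))
    exact hfin
  -- chain of inequalities
  have step1 : ∫ s in Ioo (3*T/4) (7*T/8), m ≤ ∫ s in Ioo (3*T/4) (7*T/8), f s := by
    apply setIntegral_mono_on (integrableOn_const measure_Ioo_lt_top.ne)
      (hint.mono_set hsub) measurableSet_Ioo hlow
  have step2 : ∫ s in Ioo (3*T/4) (7*T/8), f s ≤ ∫ s in Ioo (T/2) T, f s := by
    apply setIntegral_mono_set hint
    · filter_upwards [ae_restrict_mem measurableSet_Ioo] with s hs using hfnn s hs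
    · exact HasSubset.Subset.eventuallyLE hsub
  have hconst : ∫ s in Ioo (3*T/4) (7*T/8), m = (T/8) * m := by
    rw [setIntegral_const, Real.volume_real_Ioo, smul_eq_mul,
      max_eq_left (by linarith)]
    ring_nf
  -- final numeric inequality
  have h48 : (4:ℝ) ^ (-(3/2) : ℝ) = 1/8 := by
    have h24 : ((2:ℝ) ^ (2:ℝ)) = 4 := by
      rw [Real.rpow_two]; norm_num
    rw [show (4:ℝ) = (2:ℝ) ^ (2:ℝ) from h24.symm,
      ← Real.rpow_mul (by norm_num : (0:ℝ) ≤ 2),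
      show ((2:ℝ) * -(3/2)) = ((-3:ℤ):ℝ) by norm_num, Real.rpow_intCast]
    norm_num
  have hT4 : (T/4) ^ (-(3/2) : ℝ) = T ^ (-(3/2) : ℝ) * 8 := by
    rw [Real.div_rpow hT.le (by norm_num), h48]
    ring
  have h2L : (2*L) ^ p = 2 ^ p * L ^ p := Real.mul_rpow (by norm_num) hL.le
  have hTpow : T * (T ^ (-(1/4) : ℝ) * T ^ (-(3/2) : ℝ)) = T ^ (-(3/4) : ℝ) := by
    rw [← Real.rpow_add hT]
    nth_rewrite 1 [← Real.rpow_one T]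
    rw [← Real.rpow_add hT]
    norm_num
  have h12 : (1/2 : ℝ) ≤ 2 ^ p := by
    calc (1/2:ℝ) = 2 ^ (-1:ℝ) := by
          rw [Real.rpow_neg_one]; norm_num
      _ ≤ 2 ^ p := Real.rpow_le_rpow_of_exponent_le one_le_two (by simp only [hpdef]; linarith)
  have hfinal : 1/2 * T ^ (-(3/4) : ℝ) * L ^ p * Real.exp (-(8*a^2)/T) ≤ (T/8) * m := by
    have hEq : (T/8) * m = 2 ^ p * (T ^ (-(3/4) : ℝ) * L ^ p * Real.exp (-(8*a^2)/T)) := by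
      rw [hmdef, hT4, h2L]
      linear_combination (2 ^ p * L ^ p * Real.exp (-(8*a^2)/T)) * hTpow
    rw [hEq]
    have hnn : 0 ≤ T ^ (-(3/4) : ℝ) * L ^ p * Real.exp (-(8*a^2)/T) :=
      mul_nonneg (mul_nonneg (Real.rpow_nonneg hT.le _) (Real.rpow_nonneg hL.le _))
        (Real.exp_pos _).le
    calc 1/2 * T ^ (-(3/4) : ℝ) * L ^ p * Real.exp (-(8*a^2)/T)
        = 1/2 * (T ^ (-(3/4) : ℝ) * L ^ p * Real.exp (-(8*a^2)/T)) := by ring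
      _ ≤ 2 ^ p * (T ^ (-(3/4) : ℝ) * L ^ p * Real.exp (-(8*a^2)/T)) :=
          mul_le_mul_of_nonneg_right h12 hnn
  calc 1/2 * T ^ (-(3/4) : ℝ) * L ^ p * Real.exp (-(8*a^2)/T)
      ≤ (T/8) * m := hfinal
    _ = ∫ s in Ioo (3*T/4) (7*T/8), m := hconst.symm
    _ ≤ ∫ s in Ioo (3*T/4) (7*T/8), f s := step1
    _ ≤ ∫ s in Ioo (T/2) T, f s := step2
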